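/- The F_IV Yang-Baxter map R(x,y) = (y·W, x·W) with W = 1 - (p-q)/(x-y) is an involution and satisfies the set-theoretical Yang-Baxter equation (R₁₂ ∘ R₁₃ ∘ R₂₃)² = id on K³ with parameters (p,q), (p,r), (q,r) respectively, wherever all maps are defined. -/

import Mathlib

/-- The `F_IV` map with parameters `(s,t)`: `R(x,y) = (y·W, x·W)`,
`W = 1 - (s-t)/(x-y)`. -/
noncomputable def FIV {K : Type*} [Field K] (s t : K) (P : K × K) : K × K :=
  (P.2 * (1 - (s - t) / (P.1 - P.2)), P.1 * (1 - (s - t) / (P.1 - P.2)))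

/-- `F_IV` acting on coordinates 1,2 of `K³`. -/
noncomputable def FIV12 {K : Type*} [Field K] (s t : K) (P : K × K × K) : K × K × K :=
  ((FIV s t (P.1, P.2.1)).1, (FIV s t (P.1, P.2.1)).2, P.2.2)

/-- `F_IV` acting on coordinates 1,3 of `K³`. -/
noncomputable def FIV13 {K : Type*} [Field K] (s t : K) (P : K × K × K) : K × K × K :=
  ((FIV s t (P.1, P.2.2)).1, P.2.1, (FIV s t (P.1, P.2.2)).2)

/-- `F_IV` acting on coordinates 2,3 of `K³`. -/
noncomputable def FIV23 {K : Type*} [Field K] (s t : K) (P : K × K × K) : K × K × K :=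
  (P.1, (FIV s t (P.2.1, P.2.2)).1, (FIV s t (P.2.1, P.2.2)).2)

/-- Closed form for one pass `R₁₂ ∘ R₁₃ ∘ R₂₃`, stated with abstract atoms. -/
private lemma FIV_passA {K : Type*} [Field K] (p q r x y z a b c d1 e1 D2 E2 D3 E3 : K)
    (ha : a = q - r) (hb : b = p - r) (hc : c = p - q)
    (hd1 : d1 = y - z) (he1 : e1 = d1 - a)
    (hD2 : D2 = x * d1 - y * e1) (hE2 : E2 = D2 - b * d1)
    (hD3 : D3 = y * E2 - z * D2) (hE3 : E3 = e1 * D3 - c * d1 * D2)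
    (n1 : d1 ≠ 0) (n2 : D2 ≠ 0) (ne1 : e1 ≠ 0) (nD3 : D3 ≠ 0) :
    FIV12 p q (FIV13 p r (FIV23 q r (x, y, z))) =
      (z * E3 / (d1 * D3), y * E2 * E3 / (d1 * D2 * D3), x * E2 / D2) := by
  simp only [FIV12, FIV13, FIV23, FIV]
  rw [← ha, ← hb, ← hc, ← hd1]
  have wa : 1 - a / d1 = e1 / d1 := by rw [one_sub_div n1, he1]
  rw [wa]
  have wb : x - y * (e1 / d1) = D2 / d1 := by
    rw [hD2]; field_simp
  rw [wb]
  have wc : 1 - b / (D2 / d1) = E2 / D2 := by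
    rw [div_div_eq_mul_div, one_sub_div n2, hE2]
  rw [wc]
  have wd : y * (e1 / d1) * (E2 / D2) - z * (e1 / d1) = e1 * D3 / (d1 * D2) := by
    rw [hD3]; field_simp
  rw [wd]
  have we : 1 - c / (e1 * D3 / (d1 * D2)) = E3 / (e1 * D3) := by
    rw [div_div_eq_mul_div, one_sub_div (mul_ne_zero ne1 nD3), hE3]; ring
  rw [we]
  refine Prod.ext ?_ (Prod.ext ?_ ?_) <;> simp only [] <;> field_simp <;> ring

/-- The second pass returns to the starting point, stated with abstract atoms. -/
private lemma FIV_coreB {K : Type*} [Field K] (p q r x y z a b c d1 e1 D2 E2 D3 E3 G F1 Kp : K)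
    (ha : a = q - r) (hb : b = p - r) (hc : c = p - q)
    (hd1 : d1 = y - z) (he1 : e1 = d1 - a)
    (hD2 : D2 = x * d1 - y * e1) (hE2 : E2 = D2 - b * d1)
    (hD3 : D3 = y * E2 - z * D2) (hE3 : E3 = e1 * D3 - c * d1 * D2)
    (hG : G = y * E3 - x * d1 * D3) (hF1 : F1 = E2 * G - a * d1 * D2 * D3)
    (hK : Kp = D3 + b * y * d1)
    (n1 : d1 ≠ 0) (n2 : D2 ≠ 0) (ne1 : e1 ≠ 0) (nD3 : D3 ≠ 0)
    (h4 : y * E2 * E3 / (d1 * D2 * D3) - x * E2 / D2 ≠ 0)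
    (h5 : (FIV23 q r (z * E3 / (d1 * D3), y * E2 * E3 / (d1 * D2 * D3), x * E2 / D2)).1 -
        (FIV23 q r (z * E3 / (d1 * D3), y * E2 * E3 / (d1 * D2 * D3), x * E2 / D2)).2.2 ≠ 0)
    (h6 : (FIV13 p r (FIV23 q r (z * E3 / (d1 * D3), y * E2 * E3 / (d1 * D2 * D3), x * E2 / D2))).1 -
        (FIV13 p r (FIV23 q r (z * E3 / (d1 * D3), y * E2 * E3 / (d1 * D2 * D3), x * E2 / D2))).2.1 ≠ 0) :
    FIV12 p q (FIV13 p r (FIV23 q r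
      (z * E3 / (d1 * D3), y * E2 * E3 / (d1 * D2 * D3), x * E2 / D2))) = (x, y, z) := by
  have v1 : z * D2 * G - y * F1 = D2 * D3 * Kp := by
    rw [hF1, hK, hG, hE3, hD3, hE2, hD2, he1, hd1, ha, hb, hc]; ring
  have v2 : E3 * Kp - b * d1 * G = d1 * D3 * Kp := by
    rw [hK, hG, hE3, hD3, hE2, hD2, he1, hd1, ha, hb, hc]; ring
  have v3 : (y - x) * F1 - c * D2 * G = D2 * G * (y - x) := by
    rw [hF1, hG, hE3, hD3, hE2, hD2, he1, hd1, ha, hb, hc]; ring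
  simp only [FIV12, FIV13, FIV23, FIV] at h5 h6 ⊢
  rw [← ha] at h5 h6 ⊢
  rw [← hb] at h6 ⊢
  rw [← hc]
  have w1 : y * E2 * E3 / (d1 * D2 * D3) - x * E2 / D2 = E2 * G / (d1 * D2 * D3) := by
    rw [hG]; field_simp
  rw [w1] at h4 h5 h6 ⊢
  have n4 : E2 * G ≠ 0 := fun hc0 => h4 (by rw [hc0, zero_div])
  obtain ⟨nE2, nG⟩ := mul_ne_zero_iff.1 n4
  have w1p : 1 - a / (E2 * G / (d1 * D2 * D3)) = F1 / (E2 * G) := by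
    rw [div_div_eq_mul_div, one_sub_div n4, hF1]; ring
  rw [w1p] at h5 h6 ⊢
  have w1c : y * E2 * E3 / (d1 * D2 * D3) * (F1 / (E2 * G)) =
      y * E3 * F1 / (d1 * D2 * D3 * G) := by
    field_simp
  have w1b : x * E2 / D2 * (F1 / (E2 * G)) = x * F1 / (D2 * G) := by
    field_simp
  rw [w1c] at h5 h6 ⊢
  rw [w1b] at h6 ⊢
  have w2a : z * E3 / (d1 * D3) - y * E3 * F1 / (d1 * D2 * D3 * G) =
      E3 * (z * D2 * G - y * F1) / (d1 * D2 * D3 * G) := by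
    rw [div_sub_div _ _ (mul_ne_zero n1 nD3) (mul_ne_zero (mul_ne_zero (mul_ne_zero n1 n2) nD3) nG),
      div_eq_div_iff (mul_ne_zero (mul_ne_zero n1 nD3) (mul_ne_zero (mul_ne_zero (mul_ne_zero n1 n2) nD3) nG))
        (mul_ne_zero (mul_ne_zero (mul_ne_zero n1 n2) nD3) nG)]
    ring
  rw [v1] at w2a
  have w2 : z * E3 / (d1 * D3) - y * E3 * F1 / (d1 * D2 * D3 * G) = E3 * Kp / (d1 * G) := by
    rw [w2a]; field_simp
  rw [w2] at h5 h6 ⊢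
  have n5 : E3 * Kp ≠ 0 := fun hc0 => h5 (by rw [hc0, zero_div])
  obtain ⟨nE3, nK⟩ := mul_ne_zero_iff.1 n5
  have w2p : 1 - b / (E3 * Kp / (d1 * G)) = d1 * D3 / E3 := by
    rw [div_div_eq_mul_div, one_sub_div n5, div_eq_div_iff n5 nE3]
    linear_combination E3 * v2
  rw [w2p] at h6 ⊢
  have w2c : y * E3 * F1 / (d1 * D2 * D3 * G) * (d1 * D3 / E3) = y * F1 / (D2 * G) := by
    rw [div_mul_div_comm,
      div_eq_div_iff (mul_ne_zero (mul_ne_zero (mul_ne_zero (mul_ne_zero n1 n2) nD3) nG) nE3)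
        (mul_ne_zero n2 nG)]
    ring
  have w2d : z * E3 / (d1 * D3) * (d1 * D3 / E3) = z := by
    rw [div_mul_div_comm, div_eq_iff (mul_ne_zero (mul_ne_zero n1 nD3) nE3)]; ring
  rw [w2c] at h6 ⊢
  rw [w2d]
  have w3 : y * F1 / (D2 * G) - x * F1 / (D2 * G) = (y - x) * F1 / (D2 * G) := by
    rw [div_sub_div_same]; ring_nf
  rw [w3] at h6 ⊢
  have n6 : (y - x) * F1 ≠ 0 := fun hc0 => h6 (by rw [hc0, zero_div])
  obtain ⟨nyx, nF1⟩ := mul_ne_zero_iff.1 n6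
  have w3p : 1 - c / ((y - x) * F1 / (D2 * G)) = D2 * G / F1 := by
    rw [div_div_eq_mul_div, one_sub_div n6, div_eq_div_iff n6 nF1]
    linear_combination F1 * v3
  rw [w3p]
  refine Prod.ext ?_ (Prod.ext ?_ ?_) <;> simp only [] <;> field_simp <;> ring

theorem FIV_involution_and_yang_baxter {K : Type*} [Field K] [CharZero K]
    (p q r : K) :
    (∀ s t : K, ∀ x y : K, x - y ≠ 0 →
        (FIV s t (x, y)).1 - (FIV s t (x, y)).2 ≠ 0 →
        FIV s t (FIV s t (x, y)) = (x, y)) ∧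
    (∀ P : K × K × K,
        -- definedness of the first pass R₁₂ ∘ R₁₃ ∘ R₂₃
        P.2.1 - P.2.2 ≠ 0 →
        (FIV23 q r P).1 - (FIV23 q r P).2.2 ≠ 0 →
        (FIV13 p r (FIV23 q r P)).1 - (FIV13 p r (FIV23 q r P)).2.1 ≠ 0 →
        -- definedness of the second pass
        (FIV12 p q (FIV13 p r (FIV23 q r P))).2.1 -
            (FIV12 p q (FIV13 p r (FIV23 q r P))).2.2 ≠ 0 →
        (FIV23 q r (FIV12 p q (FIV13 p r (FIV23 q r P)))).1 -
            (FIV23 q r (FIV12 p q (FIV13 p r (FIV23 q r P)))).2.2 ≠ 0 →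
        (FIV13 p r (FIV23 q r (FIV12 p q (FIV13 p r (FIV23 q r P))))).1 -
            (FIV13 p r (FIV23 q r (FIV12 p q (FIV13 p r (FIV23 q r P))))).2.1 ≠ 0 →
        FIV12 p q (FIV13 p r (FIV23 q r
          (FIV12 p q (FIV13 p r (FIV23 q r P))))) = P) := by
  constructor
  · -- involution
    intro s t x y h h2
    simp only [FIV] at *
    have key : (1 - (s - t) / (x - y)) *
        (1 - (s - t) / (y * (1 - (s - t) / (x - y)) - x * (1 - (s - t) / (x - y)))) = 1 := by
      field_simp
      field_simp at h2
      rcases mul_ne_zero_iff.1 (show (y - x) * (x - y - (s - t)) ≠ 0 by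
        intro hc0; apply h2; rw [show (x - y - (s - t)) * (y - x) = 0 by linear_combination hc0, zero_div]) with ⟨_, hw⟩
      field_simp
      ring
    refine Prod.ext ?_ ?_ <;> simp <;> rw [mul_assoc, key, mul_one]
  · -- Yang–Baxter: (R₁₂ ∘ R₁₃ ∘ R₂₃)² = id
    rintro ⟨x, y, z⟩ h1 h2 h3 h4 h5 h6
    simp only [FIV12, FIV13, FIV23, FIV] at h1 h2 h3
    have h2' := h2
    have e2 : x - y * (1 - (q - r) / (y - z)) = (x * (y - z) - y * ((y - z) - (q - r))) / (y - z) := by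
      field_simp
    rw [e2] at h2
    have n2 : (x * (y - z) - y * ((y - z) - (q - r))) ≠ 0 := fun hc0 => h2 (by rw [hc0, zero_div])
    have e3 : y * (1 - (q - r) / (y - z)) * (1 - (p - r) / (x - y * (1 - (q - r) / (y - z)))) -
        z * (1 - (q - r) / (y - z)) = ((y - z) - (q - r)) * (y * ((x * (y - z) - y * ((y - z) - (q - r))) - (p - r) * (y - z)) - z * (x * (y - z) - y * ((y - z) - (q - r)))) / ((y - z) * (x * (y - z) - y * ((y - z) - (q - r)))) := by
      rw [e2]; generalize x * (y - z) - y * ((y - z) - (q - r)) = N at n2 ⊢; field_simp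
    rw [e3] at h3
    have n3 : ((y - z) - (q - r)) * (y * ((x * (y - z) - y * ((y - z) - (q - r))) - (p - r) * (y - z)) - z * (x * (y - z) - y * ((y - z) - (q - r)))) ≠ 0 := fun hc0 => h3 (by rw [hc0, zero_div])
    obtain ⟨ne1, nD3⟩ := mul_ne_zero_iff.1 n3
    have pass1 := FIV_passA p q r x y z (q - r) (p - r) (p - q) (y - z) ((y - z) - (q - r)) (x * (y - z) - y * ((y - z) - (q - r))) ((x * (y - z) - y * ((y - z) - (q - r))) - (p - r) * (y - z)) (y * ((x * (y - z) - y * ((y - z) - (q - r))) - (p - r) * (y - z)) - z * (x * (y - z) - y * ((y - z) - (q - r)))) (((y - z) - (q - r)) * (y * ((x * (y - z) - y * ((y - z) - (q - r))) - (p - r) * (y - z)) - z * (x * (y - z) - y * ((y - z) - (q - r)))) - (p - q) * (y - z) * (x * (y - z) - y * ((y - z) - (q - r))))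
      rfl rfl rfl rfl rfl rfl rfl rfl rfl h1 n2 ne1 nD3
    rw [pass1] at h4 h5 h6 ⊢
    simp only [] at h4
    exact FIV_coreB p q r x y z (q - r) (p - r) (p - q) (y - z) ((y - z) - (q - r)) (x * (y - z) - y * ((y - z) - (q - r))) ((x * (y - z) - y * ((y - z) - (q - r))) - (p - r) * (y - z)) (y * ((x * (y - z) - y * ((y - z) - (q - r))) - (p - r) * (y - z)) - z * (x * (y - z) - y * ((y - z) - (q - r)))) (((y - z) - (q - r)) * (y * ((x * (y - z) - y * ((y - z) - (q - r))) - (p - r) * (y - z)) - z * (x * (y - z) - y * ((y - z) - (q - r)))) - (p - q) * (y - z) * (x * (y - z) - y * ((y - z) - (q - r)))) (y * (((y - z) - (q - r)) * (y * ((x * (y - z) - y * ((y - z) - (q - r))) - (p - r) * (y - z)) - z * (x * (y - z) - y * ((y - z) - (q - r)))) - (p - q) * (y - z) * (x * (y - z) - y * ((y - z) - (q - r)))) - x * (y - z) * (y * ((x * (y - z) - y * ((y - z) - (q - r))) - (p - r) * (y - z)) - z * (x * (y - z) - y * ((y - z) - (q - r))))) (((x * (y - z) - y * ((y - z) - (q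 - r))) - (p - r) * (y - z)) * (y * (((y - z) - (q - r)) * (y * ((x * (y - z) - y * ((y - z) - (q - r))) - (p - r) * (y - z)) - z * (x * (y - z) - y * ((y - z) - (q - r)))) - (p - q) * (y - z) * (x * (y - z) - y * ((y - z) - (q - r)))) - x * (y - z) * (y * ((x * (y - z) - y * ((y - z) - (q - r))) - (p - r) * (y - z)) - z * (x * (y - z) - y * ((y - z) - (q - r))))) - (q - r) * (y - z) * (x * (y - z) - y * ((y - z) - (q - r))) * (y * ((x * (y - z) - y * ((y - z) - (q - r))) - (p - r) * (y - z)) - z * (x * (y - z) - y * ((y - z) - (q - r))))) ((y * ((x * (y - z) - y * ((y - z) - (q - r))) - (p - r) * (y - z)) - z * (x * (y - z) - y * ((y - z) - (q - r)))) + (p - r) * y * (y - z))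
      rfl rfl rfl rfl rfl rfl rfl rfl rfl rfl rfl rfl h1 n2 ne1 nD3 h4 h5 h6
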